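/- In the standard-form setting of the convergence proof (a10(x̄) = ∅, p = |a00(x̄)|, F₁ⱼ(x) = xⱼ for j = 1,…,κ, F₂ⱼ(x) = x_{κ+j} for j = 1,…,p), let x^t be a KKT point of the Scholtes regularization S(t) converging to a nondegenerate C-stationary point x̄ of MPCC with unique multipliers (σ̄, ϱ̄) as t → 0. Denote by α = |a01(x̄)| + 2|a00(x̄)| the codimension of T_x̄ and by α^S_t = |H(x^t)| + |N₁(x^t)| + |N₂(x^t)| the codimension of T^S_{x^t}. Then for all sufficiently small t, α − α^S_t ≤ |a01⁰(x̄)| + |a00⁻(x̄)|, where a01⁰(x̄) = {j ∈ a01(x̄) : σ̄₁ⱼ = 0} and a00⁻(x̄) = {j ∈ a00(x̄) : ϱ̄₁ⱼ < 0 and ϱ̄₂ⱼ < 0}. -/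

import Mathlib

open Filter Topology Set

namespace MPCCPaper

variable {n κ : ℕ}

/-- Differential of the `j`-th component of `F` at `x`. -/
noncomputable def Dc (F : (Fin n → ℝ) → Fin κ → ℝ) (j : Fin κ) (x : Fin n → ℝ) :
    (Fin n → ℝ) →L[ℝ] ℝ :=
  fderiv ℝ (fun y => F y j) x

/-- The MPCC feasible set `M`. -/
def Mset (F1 F2 : (Fin n → ℝ) → Fin κ → ℝ) : Set (Fin n → ℝ) :=
  {x | ∀ j, F1 x j * F2 x j = 0 ∧ 0 ≤ F1 x j ∧ 0 ≤ F2 x j}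

/-- Feasible set `M^S(t)` of the Scholtes regularization. -/
def MS (F1 F2 : (Fin n → ℝ) → Fin κ → ℝ) (t : ℝ) : Set (Fin n → ℝ) :=
  {x | ∀ j, F1 x j * F2 x j ≤ t ∧ 0 ≤ F1 x j ∧ 0 ≤ F2 x j}

/-- Feasible set `M^{S=}(t)` of the smoothing with equality constraints. -/
def MSeq (F1 F2 : (Fin n → ℝ) → Fin κ → ℝ) (t : ℝ) : Set (Fin n → ℝ) :=
  {x | ∀ j, F1 x j * F2 x j = t ∧ 0 ≤ F1 x j ∧ 0 ≤ F2 x j}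

def a01 (F1 F2 : (Fin n → ℝ) → Fin κ → ℝ) (x : Fin n → ℝ) : Set (Fin κ) :=
  {j | F1 x j = 0 ∧ 0 < F2 x j}

def a10 (F1 F2 : (Fin n → ℝ) → Fin κ → ℝ) (x : Fin n → ℝ) : Set (Fin κ) :=
  {j | 0 < F1 x j ∧ F2 x j = 0}

def a00 (F1 F2 : (Fin n → ℝ) → Fin κ → ℝ) (x : Fin n → ℝ) : Set (Fin κ) :=
  {j | F1 x j = 0 ∧ F2 x j = 0}

/-- Active set `H(x)` of the regularized constraints. -/
def Hset (F1 F2 : (Fin n → ℝ) → Fin κ → ℝ) (t : ℝ) (x : Fin n → ℝ) : Set (Fin κ) :=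
  {j | F1 x j * F2 x j = t}

def N1set (F1 : (Fin n → ℝ) → Fin κ → ℝ) (x : Fin n → ℝ) : Set (Fin κ) :=
  {j | F1 x j = 0}

def N2set (F2 : (Fin n → ℝ) → Fin κ → ℝ) (x : Fin n → ℝ) : Set (Fin κ) :=
  {j | F2 x j = 0}

/-- MPCC-tailored linear independence constraint qualification. -/
def MPCCLICQ (F1 F2 : (Fin n → ℝ) → Fin κ → ℝ) (x : Fin n → ℝ) : Prop :=
  LinearIndependent ℝ
    (Sum.elim
      (fun j : ↥(a01 F1 F2 x ∪ a00 F1 F2 x) => Dc F1 j.1 x)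
      (fun j : ↥(a10 F1 F2 x ∪ a00 F1 F2 x) => Dc F2 j.1 x))

/-- Gradient of the product constraint `F1_j · F2_j` at `x`. -/
noncomputable def gradProd (F1 F2 : (Fin n → ℝ) → Fin κ → ℝ) (j : Fin κ) (x : Fin n → ℝ) :
    (Fin n → ℝ) →L[ℝ] ℝ :=
  F2 x j • Dc F1 j x + F1 x j • Dc F2 j x

/-- LICQ for the Scholtes regularization `S(t)`. -/
def SLICQ (F1 F2 : (Fin n → ℝ) → Fin κ → ℝ) (t : ℝ) (x : Fin n → ℝ) : Prop :=
  LinearIndependent ℝ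
    (Sum.elim (fun j : ↥(Hset F1 F2 t x) => gradProd F1 F2 j.1 x)
      (Sum.elim (fun j : ↥(N1set F1 x) => Dc F1 j.1 x)
        (fun j : ↥(N2set F2 x) => Dc F2 j.1 x)))

/-- W-stationarity with prescribed multipliers (supported on the active index sets). -/
structure WStatWith (f : (Fin n → ℝ) → ℝ) (F1 F2 : (Fin n → ℝ) → Fin κ → ℝ)
    (x : Fin n → ℝ) (σ1 σ2 ϱ1 ϱ2 : Fin κ → ℝ) : Prop where
  feas : x ∈ Mset F1 F2
  supp_s1 : ∀ j, j ∉ a01 F1 F2 x → σ1 j = 0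
  supp_s2 : ∀ j, j ∉ a10 F1 F2 x → σ2 j = 0
  supp_r1 : ∀ j, j ∉ a00 F1 F2 x → ϱ1 j = 0
  supp_r2 : ∀ j, j ∉ a00 F1 F2 x → ϱ2 j = 0
  stat : fderiv ℝ f x =
    ∑ j, (σ1 j • Dc F1 j x + σ2 j • Dc F2 j x + ϱ1 j • Dc F1 j x + ϱ2 j • Dc F2 j x)

/-- C-stationarity with prescribed multipliers. -/
def CStatWith (f : (Fin n → ℝ) → ℝ) (F1 F2 : (Fin n → ℝ) → Fin κ → ℝ)
    (x : Fin n → ℝ) (σ1 σ2 ϱ1 ϱ2 : Fin κ → ℝ) : Prop :=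
  WStatWith f F1 F2 x σ1 σ2 ϱ1 ϱ2 ∧ ∀ j ∈ a00 F1 F2 x, 0 ≤ ϱ1 j * ϱ2 j

/-- S-stationarity with prescribed multipliers. -/
def SStatWith (f : (Fin n → ℝ) → ℝ) (F1 F2 : (Fin n → ℝ) → Fin κ → ℝ)
    (x : Fin n → ℝ) (σ1 σ2 ϱ1 ϱ2 : Fin κ → ℝ) : Prop :=
  WStatWith f F1 F2 x σ1 σ2 ϱ1 ϱ2 ∧ ∀ j ∈ a00 F1 F2 x, 0 ≤ ϱ1 j ∧ 0 ≤ ϱ2 j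

/-- The MPCC Lagrange function for given multipliers. -/
noncomputable def Lag (f : (Fin n → ℝ) → ℝ) (F1 F2 : (Fin n → ℝ) → Fin κ → ℝ)
    (σ1 σ2 ϱ1 ϱ2 : Fin κ → ℝ) (x : Fin n → ℝ) : ℝ :=
  f x - ∑ j, (σ1 j * F1 x j + σ2 j * F2 x j + ϱ1 j * F1 x j + ϱ2 j * F2 x j)

/-- The Hessian of `g` at `x` as a bilinear map, evaluated at `(ξ, ζ)`. -/
noncomputable def hBil (g : (Fin n → ℝ) → ℝ) (x ξ ζ : Fin n → ℝ) : ℝ :=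
  iteratedFDeriv ℝ 2 g x ![ξ, ζ]

/-- The Hessian quadratic form of `g` at `x`. -/
noncomputable def hQ (g : (Fin n → ℝ) → ℝ) (x ξ : Fin n → ℝ) : ℝ := hBil g x ξ ξ

/-- The tangent space `T_x` of MPCC at `x`. -/
def Tspace (F1 F2 : (Fin n → ℝ) → Fin κ → ℝ) (x : Fin n → ℝ) : Set (Fin n → ℝ) :=
  {ξ | (∀ j ∈ a01 F1 F2 x ∪ a00 F1 F2 x, Dc F1 j x ξ = 0) ∧
       (∀ j ∈ a10 F1 F2 x ∪ a00 F1 F2 x, Dc F2 j x ξ = 0)}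

/-- Nondegeneracy of a bilinear form on a set (subspace). -/
def NondegOn (B : (Fin n → ℝ) → (Fin n → ℝ) → ℝ) (T : Set (Fin n → ℝ)) : Prop :=
  ∀ ξ ∈ T, (∀ ζ ∈ T, B ξ ζ = 0) → ξ = 0

/-- `Q` has negative index `q` on `T`: `q` is the maximal dimension of a subspace of `T`
on which `Q` is negative definite. -/
def HasNegIndexOn (Q : (Fin n → ℝ) → ℝ) (T : Set (Fin n → ℝ)) (q : ℕ) : Prop :=
  (∃ W : Submodule ℝ (Fin n → ℝ), (W : Set (Fin n → ℝ)) ⊆ T ∧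
      Module.finrank ℝ ↥W = q ∧ ∀ ξ ∈ W, ξ ≠ 0 → Q ξ < 0) ∧
  (∀ W : Submodule ℝ (Fin n → ℝ), (W : Set (Fin n → ℝ)) ⊆ T →
      (∀ ξ ∈ W, ξ ≠ 0 → Q ξ < 0) → Module.finrank ℝ ↥W ≤ q)

/-- Nondegenerate C-stationary point (NDC1, NDC2, NDC3) with prescribed multipliers. -/
def NondegCStat (f : (Fin n → ℝ) → ℝ) (F1 F2 : (Fin n → ℝ) → Fin κ → ℝ)
    (x : Fin n → ℝ) (σ1 σ2 ϱ1 ϱ2 : Fin κ → ℝ) : Prop :=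
  CStatWith f F1 F2 x σ1 σ2 ϱ1 ϱ2 ∧ MPCCLICQ F1 F2 x ∧
  (∀ j ∈ a00 F1 F2 x, 0 < ϱ1 j * ϱ2 j) ∧
  NondegOn (hBil (Lag f F1 F2 σ1 σ2 ϱ1 ϱ2) x) (Tspace F1 F2 x)

/-- Condition NDC4: non-biactive multipliers do not vanish. -/
def NDC4 (F1 F2 : (Fin n → ℝ) → Fin κ → ℝ) (x : Fin n → ℝ) (σ1 σ2 : Fin κ → ℝ) : Prop :=
  (∀ j ∈ a01 F1 F2 x, σ1 j ≠ 0) ∧ (∀ j ∈ a10 F1 F2 x, σ2 j ≠ 0)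

/-- The biactive index: number of negative biactive multiplier pairs. -/
noncomputable def BIndex (F1 F2 : (Fin n → ℝ) → Fin κ → ℝ) (x : Fin n → ℝ)
    (ϱ1 ϱ2 : Fin κ → ℝ) : ℕ :=
  {j | j ∈ a00 F1 F2 x ∧ ϱ1 j < 0 ∧ ϱ2 j < 0}.ncard

/-- The C-index of a C-stationary point equals `c`. -/
def HasCIndex (f : (Fin n → ℝ) → ℝ) (F1 F2 : (Fin n → ℝ) → Fin κ → ℝ)
    (x : Fin n → ℝ) (σ1 σ2 ϱ1 ϱ2 : Fin κ → ℝ) (c : ℕ) : Prop :=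
  ∃ q : ℕ,
    HasNegIndexOn (hQ (Lag f F1 F2 σ1 σ2 ϱ1 ϱ2) x) (Tspace F1 F2 x) q ∧
    c = q + BIndex F1 F2 x ϱ1 ϱ2

/-- Karush-Kuhn-Tucker point of the Scholtes regularization `S(t)` with multipliers. -/
structure KKTWith (f : (Fin n → ℝ) → ℝ) (F1 F2 : (Fin n → ℝ) → Fin κ → ℝ)
    (t : ℝ) (x : Fin n → ℝ) (η ν1 ν2 : Fin κ → ℝ) : Prop where
  feas : x ∈ MS F1 F2 t
  eta_nn : ∀ j, 0 ≤ η j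
  nu1_nn : ∀ j, 0 ≤ ν1 j
  nu2_nn : ∀ j, 0 ≤ ν2 j
  comp_eta : ∀ j, η j * (t - F1 x j * F2 x j) = 0
  comp_nu1 : ∀ j, ν1 j * F1 x j = 0
  comp_nu2 : ∀ j, ν2 j * F2 x j = 0
  stat : fderiv ℝ f x =
    ∑ j, (-(η j) • gradProd F1 F2 j x + ν1 j • Dc F1 j x + ν2 j • Dc F2 j x)

/-- The Lagrange function of the Scholtes regularization `S(t)`. -/
noncomputable def LagS (f : (Fin n → ℝ) → ℝ) (F1 F2 : (Fin n → ℝ) → Fin κ → ℝ)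
    (t : ℝ) (η ν1 ν2 : Fin κ → ℝ) (x : Fin n → ℝ) : ℝ :=
  f x - ∑ j, (η j * (t - F1 x j * F2 x j) + ν1 j * F1 x j + ν2 j * F2 x j)

/-- The tangent space `T^S_x` of `S(t)` at `x`. -/
def TspaceS (F1 F2 : (Fin n → ℝ) → Fin κ → ℝ) (t : ℝ) (x : Fin n → ℝ) :
    Set (Fin n → ℝ) :=
  {ξ | (∀ j ∈ Hset F1 F2 t x, gradProd F1 F2 j x ξ = 0) ∧
       (∀ j ∈ N1set F1 x, Dc F1 j x ξ = 0) ∧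
       (∀ j ∈ N2set F2 x, Dc F2 j x ξ = 0)}

/-- Nondegenerate KKT point of `S(t)` (ND1, ND2, ND3) with prescribed multipliers. -/
def NondegKKT (f : (Fin n → ℝ) → ℝ) (F1 F2 : (Fin n → ℝ) → Fin κ → ℝ)
    (t : ℝ) (x : Fin n → ℝ) (η ν1 ν2 : Fin κ → ℝ) : Prop :=
  KKTWith f F1 F2 t x η ν1 ν2 ∧ SLICQ F1 F2 t x ∧
  (∀ j ∈ Hset F1 F2 t x, 0 < η j) ∧
  (∀ j ∈ N1set F1 x, 0 < ν1 j) ∧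
  (∀ j ∈ N2set F2 x, 0 < ν2 j) ∧
  NondegOn (hBil (LagS f F1 F2 t η ν1 ν2) x) (TspaceS F1 F2 t x)

/-- KKT point of the smoothing `S^=(t)` with multipliers. -/
structure KKTEqWith (f : (Fin n → ℝ) → ℝ) (F1 F2 : (Fin n → ℝ) → Fin κ → ℝ)
    (t : ℝ) (x : Fin n → ℝ) (lam ν1 ν2 : Fin κ → ℝ) : Prop where
  feas : x ∈ MSeq F1 F2 t
  nu1_nn : ∀ j, 0 ≤ ν1 j
  nu2_nn : ∀ j, 0 ≤ ν2 j
  comp_nu1 : ∀ j, ν1 j * F1 x j = 0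
  comp_nu2 : ∀ j, ν2 j * F2 x j = 0
  stat : fderiv ℝ f x =
    ∑ j, (lam j • gradProd F1 F2 j x + ν1 j • Dc F1 j x + ν2 j • Dc F2 j x)

/-- The Lagrange function of the smoothing `S^=(t)`. -/
noncomputable def LagSeq (f : (Fin n → ℝ) → ℝ) (F1 F2 : (Fin n → ℝ) → Fin κ → ℝ)
    (t : ℝ) (lam ν1 ν2 : Fin κ → ℝ) (x : Fin n → ℝ) : ℝ :=
  f x - ∑ j, (lam j * (F1 x j * F2 x j - t) + ν1 j * F1 x j + ν2 j * F2 x j)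

/-- The tangent space `T^{S=}_x` of `S^=(t)` at `x`. -/
def TspaceSeq (F1 F2 : (Fin n → ℝ) → Fin κ → ℝ) (x : Fin n → ℝ) : Set (Fin n → ℝ) :=
  {ξ | (∀ j, gradProd F1 F2 j x ξ = 0) ∧
       (∀ j, F1 x j = 0 → Dc F1 j x ξ = 0) ∧
       (∀ j, F2 x j = 0 → Dc F2 j x ξ = 0)}

/-- LICQ for the smoothing `S^=(t)` at `x`: gradients of all active constraints
(all equality constraints together with the active bound constraints) are linearly
independent. -/
def SeqLICQ (F1 F2 : (Fin n → ℝ) → Fin κ → ℝ) (x : Fin n → ℝ) : Prop :=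
  LinearIndependent ℝ
    (Sum.elim (fun j : Fin κ => gradProd F1 F2 j x)
      (Sum.elim (fun j : ↥(N1set F1 x) => Dc F1 j.1 x)
        (fun j : ↥(N2set F2 x) => Dc F2 j.1 x)))

/-- Nondegenerate KKT point of the smoothing `S^=(t)` with prescribed multipliers. -/
def NondegKKTEq (f : (Fin n → ℝ) → ℝ) (F1 F2 : (Fin n → ℝ) → Fin κ → ℝ)
    (t : ℝ) (x : Fin n → ℝ) (lam ν1 ν2 : Fin κ → ℝ) : Prop :=
  KKTEqWith f F1 F2 t x lam ν1 ν2 ∧ SeqLICQ F1 F2 x ∧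
  (∀ j ∈ N1set F1 x, 0 < ν1 j) ∧
  (∀ j ∈ N2set F2 x, 0 < ν2 j) ∧
  NondegOn (hBil (LagSeq f F1 F2 t lam ν1 ν2) x) (TspaceSeq F1 F2 x)

/-- The critical cone `C_x` associated with an S-stationary point and its multipliers. -/
def Ccone (F1 F2 : (Fin n → ℝ) → Fin κ → ℝ) (x : Fin n → ℝ)
    (σ1 σ2 ϱ1 ϱ2 : Fin κ → ℝ) : Set (Fin n → ℝ) :=
  {ξ | (∀ j, ((j ∈ a01 F1 F2 x ∧ σ1 j ≠ 0) ∨ (j ∈ a00 F1 F2 x ∧ 0 < ϱ1 j)) →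
        Dc F1 j x ξ = 0) ∧
       (∀ j, ((j ∈ a10 F1 F2 x ∧ σ2 j ≠ 0) ∨ (j ∈ a00 F1 F2 x ∧ 0 < ϱ2 j)) →
        Dc F2 j x ξ = 0)}

/-- The cone `C^=_x` of critical directions used for MPCC-SOC. -/
def CconeEq (F1 F2 : (Fin n → ℝ) → Fin κ → ℝ) (x : Fin n → ℝ)
    (ϱ1 ϱ2 : Fin κ → ℝ) : Set (Fin n → ℝ) :=
  {ξ | (∀ j, (j ∈ a01 F1 F2 x ∨ (j ∈ a00 F1 F2 x ∧ 0 < ϱ1 j)) → Dc F1 j x ξ = 0) ∧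
       (∀ j, (j ∈ a10 F1 F2 x ∨ (j ∈ a00 F1 F2 x ∧ 0 < ϱ2 j)) → Dc F2 j x ξ = 0) ∧
       (∀ j ∈ a00 F1 F2 x, ϱ1 j = 0 → 0 ≤ Dc F1 j x ξ) ∧
       (∀ j ∈ a00 F1 F2 x, ϱ2 j = 0 → 0 ≤ Dc F2 j x ξ)}

/-- Strong second order sufficiency condition. -/
def SSOSC (f : (Fin n → ℝ) → ℝ) (F1 F2 : (Fin n → ℝ) → Fin κ → ℝ)
    (x : Fin n → ℝ) (σ1 σ2 ϱ1 ϱ2 : Fin κ → ℝ) : Prop :=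
  ∀ ξ ∈ Ccone F1 F2 x σ1 σ2 ϱ1 ϱ2, ξ ≠ 0 → 0 < hQ (Lag f F1 F2 σ1 σ2 ϱ1 ϱ2) x ξ

/-- Second order condition for MPCC (MPCC-SOC). -/
def MPCCSOC (f : (Fin n → ℝ) → ℝ) (F1 F2 : (Fin n → ℝ) → Fin κ → ℝ)
    (x : Fin n → ℝ) (σ1 σ2 ϱ1 ϱ2 : Fin κ → ℝ) : Prop :=
  ∀ ξ ∈ CconeEq F1 F2 x ϱ1 ϱ2, ξ ≠ 0 → 0 < hQ (Lag f F1 F2 σ1 σ2 ϱ1 ϱ2) x ξ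

private lemma aux_anti {ι E : Type*} [Fintype ι] [NormedAddCommGroup E] [NormedSpace ℝ E]
    {v : ι → E} (hv : LinearIndependent ℝ v) :
    ∃ C : ℝ, 0 < C ∧ ∀ c : ι → ℝ, ‖c‖ ≤ C * ‖∑ i, c i • v i‖ := by
  classical
  let T : (ι → ℝ) →ₗ[ℝ] E :=
    { toFun := fun c => ∑ i, c i • v i
      map_add' := by intro a b; simp [add_smul, Finset.sum_add_distrib]
      map_smul' := by intro r a; simp [Finset.smul_sum, smul_smul] }
  have hker : LinearMap.ker T = ⊥ := by
    rw [LinearMap.ker_eq_bot']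
    intro c hc
    have h2 := Fintype.linearIndependent_iff.mp hv c hc
    funext i; exact h2 i
  obtain ⟨K, hK, hanti⟩ := T.exists_antilipschitzWith hker
  refine ⟨K, by exact_mod_cast hK, fun c => ?_⟩
  have h3 := hanti.le_mul_dist c 0
  simpa [dist_eq_norm, T] using h3

private lemma aux_chain {X w G R cv C p : ℝ} (hb : X ≤ C * R)
    (h6 : C * R ≤ C * (G + p * cv)) (h9 : C * (p * cv) ≤ C * (p * (X + w)))
    (h8 : C * p * X ≤ 1 / 2 * X) : X ≤ 2 * C * G + 2 * C * p * w := by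
  nlinarith [h9, h8, hb, h6]

set_option maxHeartbeats 4000000 in
/-- in the standard-form setting, the codimension drop between the MPCC
tangent space and the tangent space of the Scholtes regularization is bounded by
`|a01⁰(x̄)| + |a00⁻(x̄)|` for all sufficiently small `t`. -/
theorem codimension_estimate_standard_form
    {n κ : ℕ} (f : (Fin n → ℝ) → ℝ) (F1 F2 : (Fin n → ℝ) → Fin κ → ℝ)
    (hf : ContDiff ℝ 2 f) (hF1 : ContDiff ℝ 2 F1) (hF2 : ContDiff ℝ 2 F2)
    (xbar : Fin n → ℝ) (σ1 σ2 ϱ1 ϱ2 : Fin κ → ℝ)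
    (hnd : NondegCStat f F1 F2 xbar σ1 σ2 ϱ1 ϱ2)
    (p : ℕ) (hpκ : p ≤ κ) (hκn : κ + p ≤ n)
    (hp : p = (a00 F1 F2 xbar).ncard)
    (ha10 : a10 F1 F2 xbar = ∅)
    (hstd1 : ∀ (y : Fin n → ℝ) (j : Fin κ), F1 y j = y (Fin.castLE (by omega) j))
    (hstd2 : ∀ (y : Fin n → ℝ) (j : Fin κ) (hj : (j : ℕ) < p),
      F2 y j = y ⟨κ + (j : ℕ), by omega⟩)
    (t : ℕ → ℝ) (htpos : ∀ k, 0 < t k) (ht0 : Tendsto t atTop (𝓝 0))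
    (x : ℕ → Fin n → ℝ) (η ν1 ν2 : ℕ → Fin κ → ℝ)
    (hkkt : ∀ k, KKTWith f F1 F2 (t k) (x k) (η k) (ν1 k) (ν2 k))
    (hxlim : Tendsto x atTop (𝓝 xbar)) :
    ∃ N : ℕ, ∀ k ≥ N,
      ((a01 F1 F2 xbar).ncard : ℤ) + 2 * ((a00 F1 F2 xbar).ncard : ℤ)
        - (((Hset F1 F2 (t k) (x k)).ncard : ℤ) + ((N1set F1 (x k)).ncard : ℤ)
            + ((N2set F2 (x k)).ncard : ℤ))
        ≤ ({j | j ∈ a01 F1 F2 xbar ∧ σ1 j = 0}.ncard : ℤ)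
          + ({j | j ∈ a00 F1 F2 xbar ∧ ϱ1 j < 0 ∧ ϱ2 j < 0}.ncard : ℤ) := by
  classical
  set A := a01 F1 F2 xbar with hA
  set B := a00 F1 F2 xbar with hB
  obtain ⟨⟨hW, _⟩, hlicq, hndc2, _⟩ := hnd
  have hfeas := hW.feas
  -- every index is in A or B
  have hcover : ∀ j, j ∈ A ∨ j ∈ B := by
    intro j
    obtain ⟨hprod, h1, h2⟩ := hfeas j
    rcases eq_or_lt_of_le h1 with h1e | h1p
    · rcases eq_or_lt_of_le h2 with h2e | h2p
      · exact Or.inr ⟨h1e.symm, h2e.symm⟩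
      · exact Or.inl ⟨h1e.symm, h2p⟩
    · exfalso
      have h2z : F2 xbar j = 0 := by
        rcases mul_eq_zero.mp hprod with h | h
        · exact absurd h (by linarith)
        · exact h
      have : j ∈ a10 F1 F2 xbar := ⟨h1p, h2z⟩
      rw [ha10] at this
      exact this
  have hdisj : ∀ j, j ∈ A → j ∉ B := by
    intro j hjA hjB
    have := hjA.2
    rw [hjB.2] at this
    exact lt_irrefl 0 this
  have hs1 : ∀ j, j ∉ A → σ1 j = 0 := fun j h => hW.supp_s1 j h
  have hs2 : ∀ j, σ2 j = 0 := by
    intro j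
    apply hW.supp_s2 j
    rw [ha10]; exact Set.notMem_empty j
  have hr1 : ∀ j, j ∉ B → ϱ1 j = 0 := fun j h => hW.supp_r1 j h
  have hr2 : ∀ j, j ∉ B → ϱ2 j = 0 := fun j h => hW.supp_r2 j h
  -- the linearly independent family at xbar
  set v : (Fin κ ⊕ ↥B) → ((Fin n → ℝ) →L[ℝ] ℝ) :=
    Sum.elim (fun j => Dc F1 j xbar) (fun j => Dc F2 j.1 xbar) with hv_def
  have hv : LinearIndependent ℝ v := by
    have hli : LinearIndependent ℝ
        (Sum.elim (fun j : ↥(A ∪ B) => Dc F1 j.1 xbar)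
          (fun j : ↥(a10 F1 F2 xbar ∪ B) => Dc F2 j.1 xbar)) := hlicq
    let e : (Fin κ ⊕ ↥B) → (↥(A ∪ B) ⊕ ↥(a10 F1 F2 xbar ∪ B)) :=
      Sum.map (fun j => ⟨j, hcover j⟩) (fun j => ⟨j.1, Or.inr j.2⟩)
    have hinj : Function.Injective e := by
      intro a b hab
      rcases a with a | a <;> rcases b with b | b <;>
        simp only [e, Sum.map, Sum.elim_inl, Sum.elim_inr, Function.comp] at hab <;>
        simp_all
      · exact congrArg Subtype.val hab
      · have hab' := congrArg Subtype.val hab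
        exact Subtype.ext hab'
    have h5 := hli.comp e hinj
    have hveq : v = (Sum.elim (fun j : ↥(A ∪ B) => Dc F1 j.1 xbar)
        (fun j : ↥(a10 F1 F2 xbar ∪ B) => Dc F2 j.1 xbar)) ∘ e := by
      funext i; cases i <;> rfl
    rw [hveq]; exact h5
  obtain ⟨C, hCpos, hCb⟩ := aux_anti hv
  -- coefficients from the KKT conditions
  set c1 : ℕ → Fin κ → ℝ := fun k j => ν1 k j - η k j * F2 (x k) j with hc1_def
  set c2 : ℕ → Fin κ → ℝ := fun k j => ν2 k j - η k j * F1 (x k) j with hc2_def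
  set cv : ℕ → (Fin κ ⊕ ↥B) → ℝ :=
    fun k => Sum.elim (c1 k) (fun j => c2 k j.1) with hcv_def
  set w : (Fin κ ⊕ ↥B) → ℝ :=
    Sum.elim (fun j => σ1 j + ϱ1 j) (fun j => ϱ2 j.1) with hw_def
  -- splitting sums over A and B
  have hsplit : ∀ (g : Fin κ → ((Fin n → ℝ) →L[ℝ] ℝ)),
      ∑ j, g j = (∑ j : ↥A, g j.1) + (∑ j : ↥B, g j.1) := by
    intro g
    have hmem1 : ∀ jj : Fin κ, jj ∈ Finset.univ.filter (· ∈ A) ↔ jj ∈ A := by simp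
    have hmem2 : ∀ jj : Fin κ, jj ∈ Finset.univ.filter (fun j => j ∉ A) ↔ jj ∈ B := by
      intro jj
      simp only [Finset.mem_filter, Finset.mem_univ, true_and]
      constructor
      · intro h
        rcases hcover jj with h' | h'
        · exact absurd h' h
        · exact h'
      · intro h hA'
        exact hdisj jj hA' h
    rw [← Finset.sum_filter_add_sum_filter_not Finset.univ (· ∈ A) g]
    congr 1
    · exact Finset.sum_subtype _ hmem1 g
    · exact Finset.sum_subtype _ hmem2 g
  -- the residual term
  set R : ℕ → ((Fin n → ℝ) →L[ℝ] ℝ) := fun k =>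
    (∑ j : Fin κ, c1 k j • (Dc F1 j (x k) - Dc F1 j xbar))
    + (∑ j : ↥B, c2 k j.1 • (Dc F2 j.1 (x k) - Dc F2 j.1 xbar))
    + (∑ j : ↥A, c2 k j.1 • Dc F2 j.1 (x k)) with hR_def
  have key1 : ∀ k, ∑ i, cv k i • v i = fderiv ℝ f (x k) - R k := by
    intro k
    have hstatk : fderiv ℝ f (x k)
        = ∑ j, (c1 k j • Dc F1 j (x k) + c2 k j • Dc F2 j (x k)) := by
      rw [(hkkt k).stat]
      refine Finset.sum_congr rfl fun j _ => ?_
      simp only [gradProd, hc1_def, hc2_def]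
      module
    rw [hstatk, Finset.sum_add_distrib, hsplit (fun j => c2 k j • Dc F2 j (x k)),
      Fintype.sum_sum_type]
    simp only [hcv_def, hv_def, Sum.elim_inl, Sum.elim_inr, hR_def]
    have d1 : ∑ j : Fin κ, c1 k j • (Dc F1 j (x k) - Dc F1 j xbar)
        = ∑ j : Fin κ, c1 k j • Dc F1 j (x k) - ∑ j : Fin κ, c1 k j • Dc F1 j xbar := by
      rw [← Finset.sum_sub_distrib]
      exact Finset.sum_congr rfl fun j _ => by module
    have d2 : ∑ j : ↥B, c2 k j.1 • (Dc F2 j.1 (x k) - Dc F2 j.1 xbar)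
        = ∑ j : ↥B, c2 k j.1 • Dc F2 j.1 (x k) - ∑ j : ↥B, c2 k j.1 • Dc F2 j.1 xbar := by
      rw [← Finset.sum_sub_distrib]
      exact Finset.sum_congr rfl fun j _ => by module
    rw [d1, d2]
    abel
  have key2 : fderiv ℝ f xbar = ∑ i, w i • v i := by
    rw [hW.stat]
    have e2 : ∀ j : Fin κ, σ1 j • Dc F1 j xbar + σ2 j • Dc F2 j xbar
          + ϱ1 j • Dc F1 j xbar + ϱ2 j • Dc F2 j xbar
        = (σ1 j + ϱ1 j) • Dc F1 j xbar + ϱ2 j • Dc F2 j xbar := by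
      intro j; rw [hs2 j]; module
    rw [Finset.sum_congr rfl (fun j _ => e2 j), Finset.sum_add_distrib,
      hsplit (fun j => ϱ2 j • Dc F2 j xbar), Fintype.sum_sum_type]
    simp only [hw_def, hv_def, Sum.elim_inl, Sum.elim_inr]
    have hz : ∑ j : ↥A, ϱ2 j.1 • Dc F2 j.1 xbar = 0 :=
      Finset.sum_eq_zero fun j _ => by rw [hr2 j.1 (hdisj j.1 j.2)]; exact zero_smul ℝ _
    rw [hz]
    abel
  have key3 : ∀ k, ∑ i, (cv k i - w i) • v i
      = (fderiv ℝ f (x k) - fderiv ℝ f xbar) - R k := by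
    intro k
    have e1 : ∀ i : Fin κ ⊕ ↥B, (cv k i - w i) • v i = cv k i • v i - w i • v i := by
      intro i; module
    rw [Finset.sum_congr rfl (fun i _ => e1 i), Finset.sum_sub_distrib, key1 k, ← key2]
    abel
  -- convergence of coefficients
  have hcont1 : ∀ j : Fin κ, Tendsto (fun k => Dc F1 j (x k)) atTop (𝓝 (Dc F1 j xbar)) := by
    intro j
    have hc : Continuous fun y => Dc F1 j y :=
      (contDiff_pi.mp hF1 j).continuous_fderiv (by norm_num)
    exact (hc.tendsto xbar).comp hxlim
  have hcont2 : ∀ j : Fin κ, Tendsto (fun k => Dc F2 j (x k)) atTop (𝓝 (Dc F2 j xbar)) := by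
    intro j
    have hc : Continuous fun y => Dc F2 j y :=
      (contDiff_pi.mp hF2 j).continuous_fderiv (by norm_num)
    exact (hc.tendsto xbar).comp hxlim
  set e1s : ℕ → ℝ := fun k => ∑ j : Fin κ, ‖Dc F1 j (x k) - Dc F1 j xbar‖ with he1s
  set e2s : ℕ → ℝ := fun k => ∑ j : ↥B, ‖Dc F2 j.1 (x k) - Dc F2 j.1 xbar‖ with he2s
  set Cs : ℝ := ∑ j : ↥A, 4 / (F2 xbar j.1) ^ 2 * (‖Dc F2 j.1 xbar‖ + 1) with hCs
  set ρ : ℕ → ℝ := fun k => e1s k + e2s k + t k * Cs with hρdef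
  have hCsnn : 0 ≤ Cs := Finset.sum_nonneg fun j _ => by positivity
  have hρnn : ∀ k, 0 ≤ ρ k := by
    intro k
    have h1 : 0 ≤ e1s k := Finset.sum_nonneg fun j _ => norm_nonneg _
    have h2 : 0 ≤ e2s k := Finset.sum_nonneg fun j _ => norm_nonneg _
    have h3 : 0 ≤ t k * Cs := mul_nonneg (htpos k).le hCsnn
    simp only [hρdef]; linarith
  have hρ0 : Tendsto ρ atTop (𝓝 0) := by
    have h1 : Tendsto e1s atTop (𝓝 0) := by
      have h : Tendsto (fun k => ∑ j : Fin κ, ‖Dc F1 j (x k) - Dc F1 j xbar‖) atTop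
          (𝓝 (∑ j : Fin κ, (0:ℝ))) := by
        refine tendsto_finset_sum _ fun j _ => ?_
        have := (tendsto_sub_nhds_zero_iff.mpr (hcont1 j)).norm
        simpa using this
      rw [Finset.sum_const_zero] at h
      exact h
    have h2 : Tendsto e2s atTop (𝓝 0) := by
      have h : Tendsto (fun k => ∑ j : ↥B, ‖Dc F2 j.1 (x k) - Dc F2 j.1 xbar‖) atTop
          (𝓝 (∑ _j : ↥B, (0:ℝ))) := by
        refine tendsto_finset_sum _ fun j _ => ?_
        have := (tendsto_sub_nhds_zero_iff.mpr (hcont2 j.1)).norm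
        simpa using this
      rw [Finset.sum_const_zero] at h
      exact h
    have h3 := (h1.add h2).add (ht0.mul_const Cs)
    simpa using h3
  -- pointwise bounds on the coefficients
  have hcle : ∀ k j, |c1 k j| ≤ ‖cv k‖ := by
    intro k j
    have := norm_le_pi_norm (cv k) (Sum.inl j)
    simpa [hcv_def] using this
  have hcle2 : ∀ k (j : ↥B), |c2 k j.1| ≤ ‖cv k‖ := by
    intro k j
    have := norm_le_pi_norm (cv k) (Sum.inr j)
    simpa [hcv_def] using this
  -- the eventual estimates on A
  have hevA : ∀ᶠ k in atTop, ∀ j : ↥A,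
      F2 xbar j.1 / 2 ≤ F2 (x k) j.1 ∧ ‖Dc F2 j.1 (x k)‖ ≤ ‖Dc F2 j.1 xbar‖ + 1 := by
    rw [eventually_all]
    intro j
    have hF2t : Tendsto (fun k => F2 (x k) j.1) atTop (𝓝 (F2 xbar j.1)) :=
      (((continuous_apply j.1).comp hF2.continuous).tendsto xbar).comp hxlim
    have h1 := (hF2t.eventually_const_lt
      (by have := j.2.2; linarith : F2 xbar j.1 / 2 < F2 xbar j.1)).mono fun k h => h.le
    have h2 := ((hcont2 j.1).norm.eventually_lt_const
      (by linarith : ‖Dc F2 j.1 xbar‖ < ‖Dc F2 j.1 xbar‖ + 1)).mono fun k h => h.le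
    exact h1.and h2
  -- bound on the A-part coefficients
  have hc2A : ∀ k, (∀ j : ↥A, F2 xbar j.1 / 2 ≤ F2 (x k) j.1) →
      ∀ j : ↥A, |c2 k j.1| ≤ 4 * t k / (F2 xbar j.1) ^ 2 * |c1 k j.1| := by
    intro k hk j
    obtain ⟨hfeas1, hF1nn, hF2nn⟩ := (hkkt k).feas j.1
    have hFb : 0 < F2 xbar j.1 := j.2.2
    have hF2pos : 0 < F2 (x k) j.1 := lt_of_lt_of_le (by linarith) (hk j)
    by_cases hF1 : F1 (x k) j.1 = 0
    · have hη : η k j.1 = 0 := by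
        rcases mul_eq_zero.mp ((hkkt k).comp_eta j.1) with h | h
        · exact h
        · exfalso; rw [hF1] at h; simp at h; linarith [htpos k]
      have hν2 : ν2 k j.1 = 0 := by
        rcases mul_eq_zero.mp ((hkkt k).comp_nu2 j.1) with h | h
        · exact h
        · exact absurd h (ne_of_gt hF2pos)
      have hc2z : c2 k j.1 = 0 := by simp only [hc2_def]; rw [hν2, hη]; ring
      rw [hc2z]
      have h4t : (0:ℝ) ≤ 4 * t k := by linarith [htpos k]
      have : (0:ℝ) ≤ 4 * t k / (F2 xbar j.1) ^ 2 * |c1 k j.1| :=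
        mul_nonneg (div_nonneg h4t (sq_nonneg _)) (abs_nonneg _)
      simpa using this
    · have hF1pos : 0 < F1 (x k) j.1 := lt_of_le_of_ne hF1nn (Ne.symm hF1)
      have hν1 : ν1 k j.1 = 0 := by
        rcases mul_eq_zero.mp ((hkkt k).comp_nu1 j.1) with h | h
        · exact h
        · exact absurd h hF1
      have hν2 : ν2 k j.1 = 0 := by
        rcases mul_eq_zero.mp ((hkkt k).comp_nu2 j.1) with h | h
        · exact h
        · exact absurd h (ne_of_gt hF2pos)
      have hηnn := (hkkt k).eta_nn j.1
      have hc1e : c1 k j.1 = -(η k j.1 * F2 (x k) j.1) := by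
        simp only [hc1_def]; rw [hν1]; ring
      have hc2e : c2 k j.1 = -(η k j.1 * F1 (x k) j.1) := by
        simp only [hc2_def]; rw [hν2]; ring
      rw [hc1e, hc2e, abs_neg, abs_neg,
        abs_of_nonneg (mul_nonneg hηnn hF2nn), abs_of_nonneg (mul_nonneg hηnn hF1nn)]
      rw [div_mul_eq_mul_div, le_div_iff₀ (by positivity : (0:ℝ) < (F2 xbar j.1) ^ 2)]
      have hFb2 : F2 xbar j.1 ^ 2 ≤ 4 * F2 (x k) j.1 ^ 2 := by nlinarith [hk j, hFb]
      have hstep : η k j.1 * F1 (x k) j.1 * F2 xbar j.1 ^ 2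
          ≤ η k j.1 * F1 (x k) j.1 * (4 * F2 (x k) j.1 ^ 2) :=
        mul_le_mul_of_nonneg_left hFb2 (mul_nonneg hηnn hF1nn)
      have hstep2 : (η k j.1 * F2 (x k) j.1) * (F1 (x k) j.1 * F2 (x k) j.1)
          ≤ (η k j.1 * F2 (x k) j.1) * t k :=
        mul_le_mul_of_nonneg_left hfeas1 (mul_nonneg hηnn hF2nn)
      nlinarith [hstep, hstep2]
  -- eventual bound on the residual
  have hRb : ∀ᶠ k in atTop, ‖R k‖ ≤ ρ k * ‖cv k‖ := by
    filter_upwards [hevA] with k hk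
    have b1 : ‖∑ j : Fin κ, c1 k j • (Dc F1 j (x k) - Dc F1 j xbar)‖ ≤ e1s k * ‖cv k‖ := by
      refine le_trans (norm_sum_le _ _) ?_
      have he : e1s k = ∑ j : Fin κ, ‖Dc F1 j (x k) - Dc F1 j xbar‖ := rfl
      rw [he, Finset.sum_mul]
      refine Finset.sum_le_sum fun j _ => ?_
      calc ‖c1 k j • (Dc F1 j (x k) - Dc F1 j xbar)‖
          ≤ |c1 k j| * ‖Dc F1 j (x k) - Dc F1 j xbar‖ := by
            simpa using norm_smul_le (c1 k j) (Dc F1 j (x k) - Dc F1 j xbar)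
        _ ≤ ‖cv k‖ * ‖Dc F1 j (x k) - Dc F1 j xbar‖ :=
            mul_le_mul_of_nonneg_right (hcle k j) (norm_nonneg _)
        _ = ‖Dc F1 j (x k) - Dc F1 j xbar‖ * ‖cv k‖ := mul_comm _ _
    have b2 : ‖∑ j : ↥B, c2 k j.1 • (Dc F2 j.1 (x k) - Dc F2 j.1 xbar)‖
        ≤ e2s k * ‖cv k‖ := by
      refine le_trans (norm_sum_le _ _) ?_
      have he : e2s k = ∑ j : ↥B, ‖Dc F2 j.1 (x k) - Dc F2 j.1 xbar‖ := rfl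
      rw [he, Finset.sum_mul]
      refine Finset.sum_le_sum fun j _ => ?_
      calc ‖c2 k j.1 • (Dc F2 j.1 (x k) - Dc F2 j.1 xbar)‖
          ≤ |c2 k j.1| * ‖Dc F2 j.1 (x k) - Dc F2 j.1 xbar‖ := by
            simpa using norm_smul_le (c2 k j.1) (Dc F2 j.1 (x k) - Dc F2 j.1 xbar)
        _ ≤ ‖cv k‖ * ‖Dc F2 j.1 (x k) - Dc F2 j.1 xbar‖ :=
            mul_le_mul_of_nonneg_right (hcle2 k j) (norm_nonneg _)
        _ = ‖Dc F2 j.1 (x k) - Dc F2 j.1 xbar‖ * ‖cv k‖ := mul_comm _ _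
    have b3 : ‖∑ j : ↥A, c2 k j.1 • Dc F2 j.1 (x k)‖ ≤ (t k * Cs) * ‖cv k‖ := by
      refine le_trans (norm_sum_le _ _) ?_
      have he : (t k * Cs) * ‖cv k‖
          = ∑ j : ↥A, t k * (4 / (F2 xbar j.1) ^ 2 * (‖Dc F2 j.1 xbar‖ + 1)) * ‖cv k‖ := by
        rw [hCs, Finset.mul_sum, Finset.sum_mul]
      rw [he]
      refine Finset.sum_le_sum fun j _ => ?_
      have hb := hc2A k (fun j' => (hk j').1) j
      have hD := (hk j).2
      have h4 : (0:ℝ) ≤ 4 * t k / (F2 xbar j.1) ^ 2 :=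
        div_nonneg (by linarith [htpos k]) (sq_nonneg _)
      calc ‖c2 k j.1 • Dc F2 j.1 (x k)‖ ≤ |c2 k j.1| * ‖Dc F2 j.1 (x k)‖ := by
            simpa using norm_smul_le (c2 k j.1) (Dc F2 j.1 (x k))
        _ ≤ (4 * t k / (F2 xbar j.1) ^ 2 * |c1 k j.1|) * (‖Dc F2 j.1 xbar‖ + 1) := by
            refine mul_le_mul hb hD (norm_nonneg _) (mul_nonneg h4 (abs_nonneg _))
        _ ≤ (4 * t k / (F2 xbar j.1) ^ 2 * ‖cv k‖) * (‖Dc F2 j.1 xbar‖ + 1) := by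
            have h5 := mul_le_mul_of_nonneg_left (hcle k j.1) h4
            nlinarith [norm_nonneg (Dc F2 j.1 xbar)]
        _ = t k * (4 / (F2 xbar j.1) ^ 2 * (‖Dc F2 j.1 xbar‖ + 1)) * ‖cv k‖ := by ring
    have hRe : R k = (∑ j : Fin κ, c1 k j • (Dc F1 j (x k) - Dc F1 j xbar))
        + (∑ j : ↥B, c2 k j.1 • (Dc F2 j.1 (x k) - Dc F2 j.1 xbar))
        + (∑ j : ↥A, c2 k j.1 • Dc F2 j.1 (x k)) := rfl
    have hρe : ρ k = e1s k + e2s k + t k * Cs := rfl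
    calc ‖R k‖ ≤ ‖∑ j : Fin κ, c1 k j • (Dc F1 j (x k) - Dc F1 j xbar)‖
          + ‖∑ j : ↥B, c2 k j.1 • (Dc F2 j.1 (x k) - Dc F2 j.1 xbar)‖
          + ‖∑ j : ↥A, c2 k j.1 • Dc F2 j.1 (x k)‖ := by
          rw [hRe]; exact norm_add₃_le
      _ ≤ e1s k * ‖cv k‖ + e2s k * ‖cv k‖ + (t k * Cs) * ‖cv k‖ := by
          linarith
      _ = ρ k * ‖cv k‖ := by rw [hρe]; ring
  have hg : Tendsto (fun k => ‖fderiv ℝ f (x k) - fderiv ℝ f xbar‖) atTop (𝓝 0) := by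
    have hc : Continuous fun y => fderiv ℝ f y := hf.continuous_fderiv (by norm_num)
    have := (tendsto_sub_nhds_zero_iff.mpr ((hc.tendsto xbar).comp hxlim)).norm
    simpa using this
  have hsmall : ∀ᶠ k in atTop, C * ρ k ≤ 1 / 2 := by
    have h : Tendsto (fun k => C * ρ k) atTop (𝓝 0) := by simpa using hρ0.const_mul C
    exact (h.eventually_lt_const (by norm_num : (0:ℝ) < 1 / 2)).mono fun k h => h.le
  have hfin : ∀ᶠ k in atTop, ‖cv k - w‖
      ≤ 2 * C * ‖fderiv ℝ f (x k) - fderiv ℝ f xbar‖ + 2 * C * ρ k * ‖w‖ := by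
    filter_upwards [hRb, hsmall] with k h1 h2
    have hb := hCb (cv k - w)
    have h3 : ∑ i, (cv k - w) i • v i
        = (fderiv ℝ f (x k) - fderiv ℝ f xbar) - R k := by
      rw [← key3 k]
      rfl
    rw [h3] at hb
    have h4 : ‖(fderiv ℝ f (x k) - fderiv ℝ f xbar) - R k‖
        ≤ ‖fderiv ℝ f (x k) - fderiv ℝ f xbar‖ + ρ k * ‖cv k‖ :=
      le_trans (norm_sub_le _ _) (by linarith)
    have h5 : ‖cv k‖ ≤ ‖cv k - w‖ + ‖w‖ := by
      calc ‖cv k‖ = ‖cv k - w + w‖ := by rw [sub_add_cancel]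
        _ ≤ ‖cv k - w‖ + ‖w‖ := norm_add_le _ _
    have hρk : 0 ≤ ρ k := hρnn k
    have h6 := mul_le_mul_of_nonneg_left h4 hCpos.le
    have h7 : ρ k * ‖cv k‖ ≤ ρ k * (‖cv k - w‖ + ‖w‖) := mul_le_mul_of_nonneg_left h5 hρk
    have h8 : (C * ρ k) * ‖cv k - w‖ ≤ (1 / 2) * ‖cv k - w‖ :=
      mul_le_mul_of_nonneg_right h2 (norm_nonneg _)
    have h9 := mul_le_mul_of_nonneg_left h7 hCpos.le
    exact aux_chain hb h6 h9 h8
  have hlim0 : Tendsto (fun k => ‖cv k - w‖) atTop (𝓝 0) := by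
    refine squeeze_zero' (Eventually.of_forall fun k => norm_nonneg _) hfin ?_
    have := (hg.const_mul (2 * C)).add ((hρ0.const_mul (2 * C)).mul_const ‖w‖)
    simpa using this
  have hlimcv : Tendsto cv atTop (𝓝 w) := by
    rw [tendsto_iff_norm_sub_tendsto_zero]
    exact hlim0
  have hcomp : ∀ i, Tendsto (fun k => cv k i) atTop (𝓝 (w i)) := fun i =>
    ((continuous_apply i).tendsto w).comp hlimcv
  -- eventual positivity of F2 on A
  have hApos : ∀ j ∈ A, ∀ᶠ k in atTop, 0 < F2 (x k) j := by
    intro j hj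
    have hc : Tendsto (fun k => F2 (x k) j) atTop (𝓝 (F2 xbar j)) :=
      (((continuous_apply j).comp hF2.continuous).tendsto xbar).comp hxlim
    exact hc.eventually_const_lt hj.2
  -- the three eventual inclusions, per index
  have hq : ∀ j : Fin κ, ∀ᶠ k in atTop,
      (j ∈ A → σ1 j ≠ 0 → j ∈ N1set F1 (x k) ∪ Hset F1 F2 (t k) (x k)) ∧
      (j ∈ B → 0 < ϱ1 j → 0 < ϱ2 j → j ∈ N1set F1 (x k) ∩ N2set F2 (x k)) ∧
      (j ∈ B → ϱ1 j < 0 → j ∈ Hset F1 F2 (t k) (x k)) := by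
    have hHmem : ∀ k (j : Fin κ), η k j ≠ 0 → j ∈ Hset F1 F2 (t k) (x k) := by
      intro k j hη
      rcases mul_eq_zero.mp ((hkkt k).comp_eta j) with h | h
      · exact absurd h hη
      · have : F1 (x k) j * F2 (x k) j = t k := by linarith
        exact this
    have caseA : ∀ k (j : Fin κ), 0 < F2 (x k) j → c1 k j ≠ 0 →
        j ∈ N1set F1 (x k) ∪ Hset F1 F2 (t k) (x k) := by
      intro k j hF2 hc
      by_cases hF1 : F1 (x k) j = 0
      · exact Or.inl hF1
      · have hν1 : ν1 k j = 0 := by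
          rcases mul_eq_zero.mp ((hkkt k).comp_nu1 j) with h | h
          · exact h
          · exact absurd h hF1
        have hη : η k j ≠ 0 := by
          intro h0
          apply hc
          simp only [hc1_def]
          rw [hν1, h0]; ring
        exact Or.inr (hHmem k j hη)
    have caseB1 : ∀ k (j : Fin κ), 0 < c1 k j → j ∈ N1set F1 (x k) := by
      intro k j hc
      by_contra hF1
      have hν1 : ν1 k j = 0 := by
        rcases mul_eq_zero.mp ((hkkt k).comp_nu1 j) with h | h
        · exact h
        · exact absurd h hF1
      have he : c1 k j = -(η k j * F2 (x k) j) := by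
        simp only [hc1_def]; rw [hν1]; ring
      have hnn : 0 ≤ η k j * F2 (x k) j :=
        mul_nonneg ((hkkt k).eta_nn j) ((hkkt k).feas j).2.2
      rw [he] at hc; linarith
    have caseB2 : ∀ k (j : Fin κ), 0 < c2 k j → j ∈ N2set F2 (x k) := by
      intro k j hc
      by_contra hF2
      have hν2 : ν2 k j = 0 := by
        rcases mul_eq_zero.mp ((hkkt k).comp_nu2 j) with h | h
        · exact h
        · exact absurd h hF2
      have he : c2 k j = -(η k j * F1 (x k) j) := by
        simp only [hc2_def]; rw [hν2]; ring
      have hnn : 0 ≤ η k j * F1 (x k) j :=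
        mul_nonneg ((hkkt k).eta_nn j) ((hkkt k).feas j).2.1
      rw [he] at hc; linarith
    have caseC : ∀ k (j : Fin κ), c1 k j < 0 → j ∈ Hset F1 F2 (t k) (x k) := by
      intro k j hc
      apply hHmem k j
      intro h0
      have he : c1 k j = ν1 k j := by
        simp only [hc1_def]; rw [h0]; ring
      have := (hkkt k).nu1_nn j
      rw [he] at hc; linarith
    intro j
    rcases hcover j with hjA | hjB
    · by_cases hs : σ1 j = 0
      · filter_upwards with k
        exact ⟨fun _ hne => absurd hs hne, fun hB' => (hdisj j hjA hB').elim,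
          fun hB' => (hdisj j hjA hB').elim⟩
      · have hw1 : w (Sum.inl j) = σ1 j := by
          have : w (Sum.inl j) = σ1 j + ϱ1 j := rfl
          rw [this, hr1 j (hdisj j hjA)]; ring
        have hne : w (Sum.inl j) ≠ 0 := by rw [hw1]; exact hs
        have hev1 : ∀ᶠ k in atTop, cv k (Sum.inl j) ≠ 0 :=
          (hcomp (Sum.inl j)).eventually (eventually_ne_nhds hne)
        filter_upwards [hev1, hApos j hjA] with k h1 h2
        exact ⟨fun _ _ => caseA k j h2 h1, fun hB' => (hdisj j hjA hB').elim,
          fun hB' => (hdisj j hjA hB').elim⟩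
    · have hjnA : j ∉ A := fun hA' => hdisj j hA' hjB
      have hw1 : w (Sum.inl j) = ϱ1 j := by
        have : w (Sum.inl j) = σ1 j + ϱ1 j := rfl
        rw [this, hs1 j hjnA]; ring
      have hw2 : w (Sum.inr ⟨j, hjB⟩) = ϱ2 j := rfl
      rcases mul_pos_iff.mp (hndc2 j hjB) with ⟨h1, h2⟩ | ⟨h1, h2⟩
      · have hev1 : ∀ᶠ k in atTop, 0 < cv k (Sum.inl j) :=
          (hcomp (Sum.inl j)).eventually_const_lt (by rw [hw1]; exact h1)
        have hev2 : ∀ᶠ k in atTop, 0 < cv k (Sum.inr ⟨j, hjB⟩) :=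
          (hcomp (Sum.inr ⟨j, hjB⟩)).eventually_const_lt (by rw [hw2]; exact h2)
        filter_upwards [hev1, hev2] with k hk1 hk2
        refine ⟨fun hA' => (hdisj j hA' hjB).elim,
          fun _ _ _ => ⟨caseB1 k j hk1, caseB2 k j hk2⟩,
          fun _ hneg => absurd h1 (by linarith)⟩
      · have hev1 : ∀ᶠ k in atTop, cv k (Sum.inl j) < 0 :=
          (hcomp (Sum.inl j)).eventually_lt_const (by rw [hw1]; exact h1)
        filter_upwards [hev1] with k hk1
        refine ⟨fun hA' => (hdisj j hA' hjB).elim,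
          fun _ hp _ => absurd hp (by linarith),
          fun _ _ => caseC k j hk1⟩
  obtain ⟨N, hN⟩ := eventually_atTop.mp (eventually_all.mpr hq)
  refine ⟨N, fun k hk => ?_⟩
  have hQ := hN k hk
  set A0 : Set (Fin κ) := {j | j ∈ A ∧ σ1 j = 0} with hA0def
  set Bneg : Set (Fin κ) := {j | j ∈ B ∧ ϱ1 j < 0 ∧ ϱ2 j < 0} with hBnegdef
  set H' := Hset F1 F2 (t k) (x k) with hH'def
  set N1' := N1set F1 (x k) with hN1'def
  set N2' := N2set F2 (x k) with hN2'def
  have hA0sub : A0 ⊆ A := fun j hj => hj.1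
  have hBnegsub : Bneg ⊆ B := fun j hj => hj.1
  have i1 : A \ A0 ⊆ N1' ∪ H' := by
    rintro j ⟨hjA, hj0⟩
    have hne : σ1 j ≠ 0 := fun h => hj0 ⟨hjA, h⟩
    exact (hQ j).1 hjA hne
  have i2 : B \ Bneg ⊆ N1' ∩ N2' := by
    rintro j ⟨hjB, hj0⟩
    rcases mul_pos_iff.mp (hndc2 j hjB) with ⟨h1, h2⟩ | ⟨h1, h2⟩
    · exact (hQ j).2.1 hjB h1 h2
    · exact (hj0 ⟨hjB, h1, h2⟩).elim
  have i3 : Bneg ⊆ H' := fun j hj => (hQ j).2.2 hj.1 hj.2.1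
  have c1' : ((A \ A0) ∩ N1').ncard + (B \ Bneg).ncard ≤ N1'.ncard := by
    have hsub : ((A \ A0) ∩ N1') ∪ (B \ Bneg) ⊆ N1' :=
      union_subset inter_subset_right (fun j hj => (i2 hj).1)
    have hd : Disjoint ((A \ A0) ∩ N1') (B \ Bneg) := by
      rw [Set.disjoint_left]
      rintro j ⟨⟨hjA, -⟩, -⟩ ⟨hjB, -⟩
      exact hdisj j hjA hjB
    calc ((A \ A0) ∩ N1').ncard + (B \ Bneg).ncard
        = (((A \ A0) ∩ N1') ∪ (B \ Bneg)).ncard :=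
          (Set.ncard_union_eq hd (toFinite _) (toFinite _)).symm
      _ ≤ N1'.ncard := Set.ncard_le_ncard hsub (toFinite _)
  have c2' : (B \ Bneg).ncard ≤ N2'.ncard :=
    Set.ncard_le_ncard (fun j hj => (i2 hj).2) (toFinite _)
  have c3' : ((A \ A0) \ N1').ncard + Bneg.ncard ≤ H'.ncard := by
    have hsub : ((A \ A0) \ N1') ∪ Bneg ⊆ H' := by
      apply union_subset
      · rintro j ⟨hj1, hj2⟩
        rcases i1 hj1 with h | h
        · exact absurd h hj2
        · exact h
      · exact i3
    have hd : Disjoint ((A \ A0) \ N1') Bneg := by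
      rw [Set.disjoint_left]
      rintro j ⟨⟨hjA, -⟩, -⟩ hj
      exact hdisj j hjA hj.1
    calc ((A \ A0) \ N1').ncard + Bneg.ncard
        = (((A \ A0) \ N1') ∪ Bneg).ncard :=
          (Set.ncard_union_eq hd (toFinite _) (toFinite _)).symm
      _ ≤ H'.ncard := Set.ncard_le_ncard hsub (toFinite _)
  have c4 : ((A \ A0) ∩ N1').ncard + ((A \ A0) \ N1').ncard = (A \ A0).ncard :=
    Set.ncard_inter_add_ncard_diff_eq_ncard _ _ (toFinite _)
  have c5 : (A \ A0).ncard + A0.ncard = A.ncard :=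
    Set.ncard_diff_add_ncard_of_subset hA0sub (toFinite _)
  have c6 : (B \ Bneg).ncard + Bneg.ncard = B.ncard :=
    Set.ncard_diff_add_ncard_of_subset hBnegsub (toFinite _)
  omega


end MPCCPaper
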